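/- There is an absolute constant C such that for all integers n ≥ 1 and 0 ≤ c < n there exists a DFA over the alphabet {0,1}×{0,1} with at most C·n² states accepting exactly the language L_{n,c} = { x×y : x, y are equal-length valid Fibonacci representations and [y] = n·[x] + c }. -/

import Mathlib

/-- The Fibonacci (Zeckendorf) value of a binary word written msd-first:
`[x₁⋯x_ℓ] = Σ_j x_j · F_{ℓ−j+2}`. -/
def fibVal : List Bool → ℕ
  | [] => 0
  | a :: rest => (if a then Nat.fib (rest.length + 2) else 0) + fibVal rest

/-- A binary word is a valid Fibonacci representation if it has no factor `11`. -/
def ValidFib (w : List Bool) : Prop :=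
  w.Chain' (fun a b => a = false ∨ b = false)

namespace MultAux

def fibVal' : List Bool → ℕ
  | [] => 0
  | a :: rest => (if a then Nat.fib (rest.length + 1) else 0) + fibVal' rest

lemma fibVal_snoc (p : List Bool) (a : Bool) :
    fibVal (p ++ [a]) = fibVal p + fibVal' p + (if a then 1 else 0) := by
  induction p with
  | nil => cases a <;> simp [fibVal, fibVal']
  | cons b t ih =>
    simp only [List.cons_append, fibVal, fibVal', ih, List.length_append, List.length_cons,
      List.length_nil, List.append_eq]
    rw [show t.length + (0 + 1) + 2 = t.length + 1 + 2 from by omega,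
      show t.length + 1 + 2 = (t.length + 1) + 2 from rfl, Nat.fib_add_two,
      show t.length + 1 + 1 = t.length + 2 from rfl]
    cases b <;> simp <;> omega

lemma fibVal'_snoc (p : List Bool) (a : Bool) :
    fibVal' (p ++ [a]) = fibVal p + (if a then 1 else 0) := by
  induction p with
  | nil => cases a <;> simp [fibVal, fibVal']
  | cons b t ih =>
    simp only [List.cons_append, fibVal, fibVal', ih, List.length_append, List.length_cons,
      List.length_nil, List.append_eq]
    rw [show t.length + (0 + 1) + 1 = t.length + 2 from by omega]
    cases b <;> simp <;> omega

lemma fibVal_append (p s : List Bool) :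
    fibVal (p ++ s) = Nat.fib (s.length + 1) * fibVal p + Nat.fib s.length * fibVal' p
      + fibVal s := by
  induction p with
  | nil => simp [fibVal, fibVal']
  | cons b t ih =>
    simp only [List.cons_append, fibVal, fibVal', ih, List.length_append, List.append_eq]
    cases b
    · simp
    · simp only [if_pos rfl]
      have h := Nat.fib_add s.length (t.length + 1)
      rw [show t.length + s.length + 2 = s.length + (t.length + 1) + 1 from by omega, h,
        show t.length + 1 + 1 = t.length + 2 from rfl]
      simp only [if_true]
      ring

lemma validFib_tail {a : Bool} {t : List Bool} (h : ValidFib (a :: t)) : ValidFib t :=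
  List.IsChain.tail h

lemma validFib_second {b : Bool} {t : List Bool} (h : ValidFib (true :: b :: t)) : b = false := by
  rcases List.isChain_cons_cons.mp h with ⟨h1, _⟩
  rcases h1 with h | h
  · exact absurd h (by simp)
  · exact h

lemma fibVal_lt_of_valid : ∀ (s : List Bool), ValidFib s → fibVal s < Nat.fib (s.length + 2) := by
  have H : ∀ k, ∀ s : List Bool, s.length ≤ k → ValidFib s →
      fibVal s < Nat.fib (s.length + 2) := by
    intro k
    induction k with
    | zero =>
      intro s hs _
      have : s = [] := List.length_eq_zero_iff.mp (Nat.le_zero.mp hs)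
      subst this; simp [fibVal]
    | succ k ih =>
      rintro (_ | ⟨a, t⟩) hlen hv
      · simp [fibVal]
      · simp only [List.length_cons] at hlen
        cases a with
        | false =>
          have h1 := ih t (by omega) (validFib_tail hv)
          have hmono : Nat.fib (t.length + 2) ≤ Nat.fib (t.length + 1 + 2) :=
            Nat.fib_mono (by omega)
          simp only [fibVal, if_neg (Bool.false_ne_true), List.length_cons, Nat.zero_add]
          omega
        | true =>
          rcases t with _ | ⟨b, t'⟩
          · simp [fibVal, Nat.fib]
          · have hb := validFib_second hv
            subst hb
            have hlt := ih t' (by simp only [List.length_cons] at hlen ⊢; omega)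
              (validFib_tail (validFib_tail hv))
            simp only [fibVal, List.length_cons, if_pos rfl, if_neg (Bool.false_ne_true),
              Nat.zero_add, if_true]
            have h1 : Nat.fib (t'.length + 1 + 1 + 2) = Nat.fib (t'.length + 1 + 2)
                + Nat.fib (t'.length + 2) := by
              rw [show t'.length + 1 + 1 + 2 = (t'.length + 2) + 2 from rfl, Nat.fib_add_two,
                show t'.length + 2 + 1 = t'.length + 1 + 2 from by omega]
              omega
            omega
  intro s hv; exact H s.length s le_rfl hv

lemma docagne (i : ℕ) : ∀ ℓ : ℕ,
    (Nat.fib (ℓ + i + 2) : ℤ) * Nat.fib ℓ - (Nat.fib (ℓ + i + 1) : ℤ) * Nat.fib (ℓ + 1)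
      = (-1) ^ (ℓ + 1) * Nat.fib (i + 1) := by
  intro ℓ
  induction ℓ with
  | zero => simp
  | succ ℓ ih =>
    have h1 : Nat.fib (ℓ + 1 + i + 2) = Nat.fib (ℓ + i + 2) + Nat.fib (ℓ + i + 1) := by
      rw [show ℓ + 1 + i + 2 = (ℓ + i + 1) + 2 from by omega, Nat.fib_add_two,
        show ℓ + i + 1 + 1 = ℓ + i + 2 from rfl]; omega
    have h2 : Nat.fib (ℓ + 1 + 1) = Nat.fib (ℓ + 1) + Nat.fib ℓ := by
      rw [show ℓ + 1 + 1 = ℓ + 2 from rfl, Nat.fib_add_two]; omega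
    rw [show ℓ + 1 + i + 1 = ℓ + i + 2 from by omega, h1, h2]
    push_cast
    rw [show ℓ + 1 + 1 = ℓ + 2 from rfl]
    rw [show ((-1 : ℤ) ^ (ℓ + 2)) = (-1) ^ (ℓ+1) * (-1) from by ring]
    nlinarith [ih]

/-- The key bound: for a valid word `p` and any `i`,
`|F_{ℓ+i+2}·V'(p) − F_{ℓ+i+1}·V(p)| + F_i ≤ F_{ℓ+i+1}` where `ℓ = |p|`. -/
lemma key_bound : ∀ (p : List Bool), ValidFib p → ∀ i : ℕ,
    |(Nat.fib (p.length + i + 2) : ℤ) * fibVal' p - (Nat.fib (p.length + i + 1) : ℤ) * fibVal p|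
      + Nat.fib i ≤ Nat.fib (p.length + i + 1) := by
  have H : ∀ k, ∀ p : List Bool, p.length ≤ k → ValidFib p → ∀ i : ℕ,
      |(Nat.fib (p.length + i + 2) : ℤ) * fibVal' p - (Nat.fib (p.length + i + 1) : ℤ) * fibVal p|
        + Nat.fib i ≤ Nat.fib (p.length + i + 1) := by
    intro k
    induction k with
    | zero =>
      intro p hp _ i
      have : p = [] := List.length_eq_zero_iff.mp (Nat.le_zero.mp hp)
      subst this
      simp [fibVal, fibVal']
      exact_mod_cast Nat.fib_le_fib_succ
    | succ k ih =>
      rintro (_ | ⟨a, t⟩) hlen hv i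
      · simp [fibVal, fibVal']
        exact_mod_cast Nat.fib_le_fib_succ
      · simp only [List.length_cons] at hlen
        cases a with
        | false =>
          have h1 := ih t (by omega) (validFib_tail hv) (i + 1)
          simp only [fibVal, fibVal', if_neg (Bool.false_ne_true), List.length_cons,
            Nat.zero_add] at h1 ⊢
          rw [show t.length + 1 + i + 2 = t.length + (i + 1) + 2 from by omega,
            show t.length + 1 + i + 1 = t.length + (i + 1) + 1 from by omega]
          have : (Nat.fib i : ℤ) ≤ Nat.fib (i + 1) := by exact_mod_cast Nat.fib_le_fib_succ
          omega
        | true =>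
          rcases t with _ | ⟨b, t'⟩
          · have h1 : fibVal [true] = 1 := by simp [fibVal]
            have h2 : fibVal' [true] = 1 := by simp [fibVal']
            rw [h1, h2]
            simp only [List.length_cons, List.length_nil]
            rw [show 0 + 1 + i + 2 = (i + 1) + 2 from by omega, Nat.fib_add_two,
              show 0 + 1 + i + 1 = i + 2 from by omega,
              show i + 1 + 1 = i + 2 from rfl]
            have h3 : Nat.fib (i + 2) = Nat.fib i + Nat.fib (i + 1) := Nat.fib_add_two
            have h4 : |((Nat.fib (i + 1) : ℤ) + Nat.fib (i + 2)) * 1 - (Nat.fib (i + 2) : ℤ) * 1|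
                = (Nat.fib (i + 1) : ℤ) := by
              rw [show ((Nat.fib (i + 1) : ℤ) + Nat.fib (i + 2)) * 1 - (Nat.fib (i + 2) : ℤ) * 1
                = (Nat.fib (i + 1) : ℤ) from by ring]
              exact abs_of_nonneg (by positivity)
            push_cast [h4] at *
            omega
          · have hb := validFib_second hv
            subst hb
            have ht' : ValidFib t' := validFib_tail (validFib_tail hv)
            have hlen' : t'.length ≤ k := by
              simp only [List.length_cons] at hlen; omega
            have hIH := ih t' hlen' ht' (i + 2)
            have hdoc := docagne i (t'.length + 2)
            have habs1 : |(Nat.fib (t'.length + 2 + i + 2) : ℤ) * Nat.fib (t'.length + 2) -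
                (Nat.fib (t'.length + 2 + i + 1) : ℤ) * Nat.fib (t'.length + 2 + 1)|
                = (Nat.fib (i + 1) : ℤ) := by
              rw [hdoc, abs_mul, abs_pow, abs_neg, abs_one, one_pow, one_mul, Nat.abs_cast]
            simp only [fibVal, fibVal', List.length_cons, if_pos rfl,
              if_neg (Bool.false_ne_true), Nat.zero_add, if_true]
            push_cast
            rw [show t'.length + 1 + 1 + i + 2 = t'.length + 2 + i + 2 from rfl,
              show t'.length + 1 + 1 + i + 1 = t'.length + 2 + i + 1 from rfl,
              show t'.length + 1 + 1 = t'.length + 2 from rfl,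
              show t'.length + 1 + 2 = t'.length + 2 + 1 from by omega]
            rw [show t'.length + (i + 2) + 2 = t'.length + 2 + i + 2 from by omega,
              show t'.length + (i + 2) + 1 = t'.length + 2 + i + 1 from by omega] at hIH
            have expand : (Nat.fib (t'.length + 2 + i + 2) : ℤ) *
                  ((Nat.fib (t'.length + 2) : ℤ) + (fibVal' t' : ℤ)) -
                (Nat.fib (t'.length + 2 + i + 1) : ℤ) *
                  ((Nat.fib (t'.length + 2 + 1) : ℤ) + (fibVal t' : ℤ))
                = ((Nat.fib (t'.length + 2 + i + 2) : ℤ) * Nat.fib (t'.length + 2) -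
                    (Nat.fib (t'.length + 2 + i + 1) : ℤ) * Nat.fib (t'.length + 2 + 1))
                  + ((Nat.fib (t'.length + 2 + i + 2) : ℤ) * (fibVal' t' : ℤ) -
                    (Nat.fib (t'.length + 2 + i + 1) : ℤ) * (fibVal t' : ℤ)) := by ring
            have htri := abs_add_le
              ((Nat.fib (t'.length + 2 + i + 2) : ℤ) * Nat.fib (t'.length + 2) -
                (Nat.fib (t'.length + 2 + i + 1) : ℤ) * Nat.fib (t'.length + 2 + 1))
              ((Nat.fib (t'.length + 2 + i + 2) : ℤ) * (fibVal' t' : ℤ) -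
                (Nat.fib (t'.length + 2 + i + 1) : ℤ) * (fibVal t' : ℤ))
            have hf2 : (Nat.fib (i + 2) : ℤ) = Nat.fib i + Nat.fib (i + 1) := by
              have : Nat.fib (i + 2) = Nat.fib i + Nat.fib (i + 1) := Nat.fib_add_two
              push_cast [this]; ring
            push_cast at hIH
            rw [expand]
            calc |_| + (Nat.fib i : ℤ) ≤ _ := by exact add_le_add_left htri _
              _ ≤ (Nat.fib (t'.length + 2 + i + 1) : ℤ) := by
                rw [habs1]; linarith
  intro p hv i; exact H p.length p le_rfl hv i

end MultAux

-- STAGE3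
namespace MultAux

def Dv (n : ℕ) (w : List (Bool × Bool)) : ℤ :=
  (fibVal (w.map Prod.snd) : ℤ) - n * fibVal (w.map Prod.fst)

def Dv' (n : ℕ) (w : List (Bool × Bool)) : ℤ :=
  (fibVal' (w.map Prod.snd) : ℤ) - n * fibVal' (w.map Prod.fst)

def vstep (n : ℕ) (ab : Bool × Bool) : ℤ :=
  (if ab.2 then 1 else 0) - (n : ℤ) * (if ab.1 then 1 else 0)

lemma Dv_snoc (n : ℕ) (w : List (Bool × Bool)) (ab : Bool × Bool) :
    Dv n (w ++ [ab]) = Dv n w + Dv' n w + vstep n ab := by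
  simp only [Dv, Dv', vstep, List.map_append, List.map_cons, List.map_nil,
    fibVal_snoc, fibVal'_snoc]
  push_cast
  ring

lemma Dv'_snoc (n : ℕ) (w : List (Bool × Bool)) (ab : Bool × Bool) :
    Dv' n (w ++ [ab]) = Dv n w + vstep n ab := by
  simp only [Dv, Dv', vstep, List.map_append, List.map_cons, List.map_nil,
    fibVal_snoc, fibVal'_snoc]
  push_cast
  ring

set_option maxHeartbeats 1000000 in
lemma prefix_bound (n c : ℕ) (hn : 1 ≤ n) (hc : c < n) (p s : List (Bool × Bool))
    (hx : ValidFib ((p ++ s).map Prod.fst) ) (hy : ValidFib ((p ++ s).map Prod.snd))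
    (heq : fibVal ((p ++ s).map Prod.snd) = n * fibVal ((p ++ s).map Prod.fst) + c) :
    |Dv n p| ≤ 5 * n ∧ |Dv' n p| ≤ 5 * n := by
  set px := p.map Prod.fst with hpx
  set py := p.map Prod.snd with hpy
  set sx := s.map Prod.fst with hsx
  set sy := s.map Prod.snd with hsy
  have hmapx : (p ++ s).map Prod.fst = px ++ sx := by simp [hpx, hsx]
  have hmapy : (p ++ s).map Prod.snd = py ++ sy := by simp [hpy, hsy]
  rw [hmapx] at hx heq
  rw [hmapy] at hy heq
  obtain ⟨hx1, hx2, -⟩ := List.isChain_append.mp hx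
  obtain ⟨hy1, hy2, -⟩ := List.isChain_append.mp hy
  set ℓ := p.length with hℓ
  set m := s.length with hm
  have hpxl : px.length = ℓ := by simp [hpx, hℓ]
  have hpyl : py.length = ℓ := by simp [hpy, hℓ]
  have hsxl : sx.length = m := by simp [hsx, hm]
  have hsyl : sy.length = m := by simp [hsy, hm]
  -- abbreviations (as integers)
  set a : ℤ := (Nat.fib (m + 1) : ℤ) with ha
  set b : ℤ := (Nat.fib m : ℤ) with hb
  set e : ℤ := (Nat.fib (ℓ + 1) : ℤ) with he
  set f : ℤ := (Nat.fib (ℓ + 2) : ℤ) with hf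
  set Δ : ℤ := (Nat.fib (ℓ + m + 2) : ℤ) with hΔdef
  set D : ℤ := Dv n p with hD
  set D' : ℤ := Dv' n p with hD'
  set R : ℤ := (n : ℤ) * fibVal sx + c - fibVal sy with hR
  set S : ℤ := f * D' - e * D with hS
  -- E1
  have happx := fibVal_append px sx
  have happy := fibVal_append py sy
  rw [hsxl] at happx
  rw [hsyl] at happy
  have hn1 : (1 : ℤ) ≤ (n : ℤ) := by exact_mod_cast hn
  have hE1 : a * D + b * D' = R := by
    have h1 : (fibVal (py ++ sy) : ℤ) = (n : ℤ) * fibVal (px ++ sx) + c := by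
      exact_mod_cast heq
    rw [happx, happy] at h1
    push_cast at h1
    rw [ha, hb, hD, hD', hR]
    simp only [Dv, Dv', ← hpx, ← hpy]
    push_cast
    linarith
  -- bounds on R
  have hsxlt : fibVal sx < Nat.fib (m + 2) := hsxl ▸ fibVal_lt_of_valid sx hx2
  have hsylt : fibVal sy < Nat.fib (m + 2) := hsyl ▸ fibVal_lt_of_valid sy hy2
  have hRub : R ≤ (n : ℤ) * Nat.fib (m + 2) := by
    rw [hR]
    have h1 : (fibVal sx : ℤ) < (Nat.fib (m + 2) : ℤ) := by exact_mod_cast hsxlt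
    have h2 : (0 : ℤ) ≤ (fibVal sy : ℤ) := by positivity
    have h3 : (c : ℤ) < (n : ℤ) := by exact_mod_cast hc
    have h4 : (n : ℤ) * ((fibVal sx : ℤ) + 1) ≤ (n : ℤ) * (Nat.fib (m + 2) : ℤ) :=
      mul_le_mul_of_nonneg_left (by linarith) (by linarith)
    linarith
  have hRlb : -((n : ℤ) * Nat.fib (m + 2)) ≤ R := by
    rw [hR]
    have h1 : (fibVal sy : ℤ) < (Nat.fib (m + 2) : ℤ) := by exact_mod_cast hsylt
    have h2 : (0 : ℤ) ≤ (n : ℤ) * fibVal sx := by positivity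
    have h5 : (1 : ℤ) ≤ (Nat.fib (m + 2) : ℤ) := by
      exact_mod_cast Nat.fib_pos.mpr (by omega)
    have h6 : (Nat.fib (m + 2) : ℤ) ≤ (n : ℤ) * (Nat.fib (m + 2) : ℤ) :=
      le_mul_of_one_le_left (by positivity) hn1
    linarith
  have hRabs : |R| ≤ (n : ℤ) * Nat.fib (m + 2) := abs_le.mpr ⟨hRlb, hRub⟩
  -- E2
  have hn0 : (0 : ℤ) ≤ (n : ℤ) := by positivity
  have hb0 : (0 : ℤ) ≤ b := by rw [hb]; positivity
  have he0 : (0 : ℤ) ≤ e := by rw [he]; positivity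
  have hf0 : (0 : ℤ) ≤ f := by rw [hf]; positivity
  have ha0 : (0 : ℤ) ≤ a := by rw [ha]; positivity
  have hF0 : (0 : ℤ) ≤ (Nat.fib (m + 2) : ℤ) := by positivity
  have hkx := key_bound px hx1 0
  have hky := key_bound py hy1 0
  rw [hpxl] at hkx
  rw [hpyl] at hky
  simp only [Nat.fib_zero, Nat.cast_zero, add_zero] at hkx hky
  have hSabs : |S| ≤ ((n : ℤ) + 1) * e := by
    have hexp : S = (f * (fibVal' py : ℤ) - e * (fibVal py : ℤ))
        - (n : ℤ) * (f * (fibVal' px : ℤ) - e * (fibVal px : ℤ)) := by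
      rw [hS, hD, hD', Dv, Dv', ← hpx, ← hpy, he, hf]
      ring
    rw [hexp]
    have t1 : |f * (fibVal' py : ℤ) - e * (fibVal py : ℤ)| ≤ e := by
      rw [he, hf]; exact hky
    have t2 : |f * (fibVal' px : ℤ) - e * (fibVal px : ℤ)| ≤ e := by
      rw [he, hf]; exact hkx
    have htri := abs_sub (f * (fibVal' py : ℤ) - e * (fibVal py : ℤ))
      ((n : ℤ) * (f * (fibVal' px : ℤ) - e * (fibVal px : ℤ)))
    rw [abs_mul, Nat.abs_cast] at htri
    have t3 := mul_le_mul_of_nonneg_left t2 hn0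
    linarith only [htri, t1, t3]
  -- determinant identity
  have hΔ : Δ = b * e + a * f := by
    rw [hΔdef, ha, hb, he, hf]
    have h0 := Nat.fib_add m (ℓ + 1)
    rw [show m + (ℓ + 1) + 1 = ℓ + m + 2 from by omega] at h0
    rw [show ℓ + 1 + 1 = ℓ + 2 from rfl] at h0
    exact_mod_cast h0
  have hΔpos : 0 < Δ := by
    rw [hΔdef]
    exact_mod_cast Nat.fib_pos.mpr (by omega)
  -- fib product inequalities
  have hfibmono1 : e ≤ f := by
    rw [he, hf]; exact_mod_cast Nat.fib_mono (by omega)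
  have hfib3 : f * (Nat.fib (m + 2) : ℤ) ≤ 2 * Δ := by
    have h1 := Nat.fib_add (m + 1) (ℓ + 1)
    rw [show m + 1 + (ℓ + 1) + 1 = ℓ + m + 3 from by omega,
      show ℓ + 1 + 1 = ℓ + 2 from rfl, show m + 1 + 1 = m + 2 from rfl] at h1
    have h2 : Nat.fib (ℓ + m + 3) ≤ 2 * Nat.fib (ℓ + m + 2) := by
      rw [show ℓ + m + 3 = (ℓ + m + 1) + 2 from by omega, Nat.fib_add_two]
      have h5 := Nat.fib_mono (show ℓ + m + 1 ≤ ℓ + m + 2 from by omega)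
      rw [show ℓ + m + 1 + 1 = ℓ + m + 2 from rfl]
      omega
    have h3 : Nat.fib (m + 2) * Nat.fib (ℓ + 2) ≤ 2 * Nat.fib (ℓ + m + 2) := by
      have h4 : Nat.fib (m + 2) * Nat.fib (ℓ + 2) ≤ Nat.fib (ℓ + m + 3) :=
        h1 ▸ Nat.le_add_left _ _
      exact le_trans h4 h2
    rw [hf, hΔdef]
    have h6 : ((Nat.fib (m + 2) : ℤ)) * (Nat.fib (ℓ + 2) : ℤ)
        ≤ 2 * (Nat.fib (ℓ + m + 2) : ℤ) := by exact_mod_cast h3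
    linarith
  have hfib4 : e * (Nat.fib (m + 2) : ℤ) ≤ 2 * Δ := by
    have := mul_le_mul_of_nonneg_right hfibmono1 hF0
    linarith
  have hbe : b * e ≤ Δ := by
    have := mul_nonneg ha0 hf0
    linarith
  have hae : a * e ≤ Δ := by
    have h1 := mul_le_mul_of_nonneg_left hfibmono1 ha0
    have h2 := mul_nonneg hb0 he0
    linarith
  -- solve for D and D'
  constructor
  · have k1 : Δ * D = f * R - b * S := by
      rw [← hE1, hS, hΔ]; ring
    have k2 : |Δ * D| ≤ f * ((n : ℤ) * Nat.fib (m + 2)) + b * (((n : ℤ) + 1) * e) := by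
      rw [k1]
      have htri := abs_sub (f * R) (b * S)
      rw [abs_mul, abs_mul, abs_of_nonneg hf0, abs_of_nonneg hb0] at htri
      have u1 := mul_le_mul_of_nonneg_left hRabs hf0
      have u2 := mul_le_mul_of_nonneg_left hSabs hb0
      linarith
    have v1 := mul_le_mul_of_nonneg_left hfib3 hn0
    have v2 := mul_le_mul_of_nonneg_left hbe (show (0 : ℤ) ≤ (n : ℤ) + 1 by linarith)
    have v3 := mul_le_mul_of_nonneg_right
      (show (3 : ℤ) * (n : ℤ) + 1 ≤ 5 * (n : ℤ) by linarith) hΔpos.le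
    have k3 : |Δ * D| ≤ Δ * (5 * (n : ℤ)) := by linarith only [k2, v1, v2, v3]
    rw [abs_mul, abs_of_nonneg hΔpos.le] at k3
    have := le_of_mul_le_mul_left k3 hΔpos
    linarith
  · have k1 : Δ * D' = a * S + e * R := by
      rw [← hE1, hS, hΔ]; ring
    have k2 : |Δ * D'| ≤ a * (((n : ℤ) + 1) * e) + e * ((n : ℤ) * Nat.fib (m + 2)) := by
      rw [k1]
      have htri := abs_add_le (a * S) (e * R)
      rw [abs_mul, abs_mul, abs_of_nonneg ha0, abs_of_nonneg he0] at htri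
      have u1 := mul_le_mul_of_nonneg_left hSabs ha0
      have u2 := mul_le_mul_of_nonneg_left hRabs he0
      linarith
    have v1 := mul_le_mul_of_nonneg_left hfib4 hn0
    have v2 := mul_le_mul_of_nonneg_left hae (show (0 : ℤ) ≤ (n : ℤ) + 1 by linarith)
    have v3 := mul_le_mul_of_nonneg_right
      (show (3 : ℤ) * (n : ℤ) + 1 ≤ 5 * (n : ℤ) by linarith) hΔpos.le
    have k3 : |Δ * D'| ≤ Δ * (5 * (n : ℤ)) := by linarith only [k2, v1, v2, v3]
    rw [abs_mul, abs_of_nonneg hΔpos.le] at k3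
    have := le_of_mul_le_mul_left k3 hΔpos
    linarith


def encode (n : ℕ) (d : ℤ) : Option (Fin (10 * n + 1)) :=
  if h : 0 ≤ d + 5 * n ∧ d + 5 * n < 10 * n + 1 then
    some ⟨(d + 5 * n).toNat, by omega⟩
  else none

lemma encode_spec {n : ℕ} {d : ℤ} {i : Fin (10 * n + 1)} (h : encode n d = some i) :
    ((i : ℕ) : ℤ) - 5 * n = d := by
  unfold encode at h
  split at h
  · rename_i h'
    injection h with h
    subst h
    simp only [Fin.val_mk]
    omega
  · exact absurd h (by simp)

lemma encode_isSome {n : ℕ} {d : ℤ} (h : |d| ≤ 5 * n) : ∃ i, encode n d = some i := by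
  unfold encode
  rw [abs_le] at h
  rw [dif_pos (by constructor <;> omega)]
  exact ⟨_, rfl⟩

/-- The DFA. -/
def dfaM (n c : ℕ) : DFA (Bool × Bool) (Option (Fin (10 * n + 1) × Fin (10 * n + 1) × Bool × Bool)) where
  step := fun q ab =>
    match q with
    | none => none
    | some (i, i', a, b) =>
      if (a && ab.1) || (b && ab.2) then none
      else
        match encode n ((((i : ℕ) : ℤ) - 5 * n) + (((i' : ℕ) : ℤ) - 5 * n) + vstep n ab),
              encode n ((((i : ℕ) : ℤ) - 5 * n) + vstep n ab) with
        | some j, some j' => some (j, j', ab.1, ab.2)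
        | _, _ => none
  start := some (⟨5 * n, by omega⟩, ⟨5 * n, by omega⟩, false, false)
  accept := {q | ∃ r, q = some r ∧ (((r.1 : ℕ) : ℤ) - 5 * n = (c : ℤ))}

lemma dfa_sound (n c : ℕ) : ∀ w : List (Bool × Bool),
    ∀ r, (dfaM n c).eval w = some r →
      (((r.1 : ℕ) : ℤ) - 5 * n = Dv n w) ∧ (((r.2.1 : ℕ) : ℤ) - 5 * n = Dv' n w) ∧
      ValidFib (w.map Prod.fst) ∧ ValidFib (w.map Prod.snd) ∧
      (w = [] → r.2.2 = (false, false)) ∧ (∀ u ∈ w.getLast?, u = r.2.2) := by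
  intro w
  induction w using List.reverseRecOn with
  | nil =>
    intro r h
    have h' : (dfaM n c).start = some r := h
    simp only [dfaM] at h'
    injection h' with h'
    subst h'
    refine ⟨?_, ?_, ?_, ?_, ?_, ?_⟩
    · simp [Dv, fibVal]
    · simp [Dv', fibVal']
    · exact List.isChain_nil
    · exact List.isChain_nil
    · intro _; rfl
    · intro u hu; simp at hu
  | append_singleton w ab ih =>
    intro r h
    rw [DFA.eval_append_singleton] at h
    cases heval : (dfaM n c).eval w with
    | none => rw [heval] at h; exact absurd h (by simp [dfaM, DFA.step])
    | some q =>
      rw [heval] at h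
      obtain ⟨i, i', a, b⟩ := q
      obtain ⟨av, bv⟩ := ab
      obtain ⟨ihD, ihD', ihvx, ihvy, ihnil, ihlast⟩ := ih _ heval
      simp only [dfaM] at h
      by_cases hguard : (a && av) || (b && bv)
      · rw [if_pos hguard] at h; exact absurd h (by simp)
      · rw [if_neg hguard] at h
        cases henc1 : encode n ((((i : ℕ) : ℤ) - 5 * n) + (((i' : ℕ) : ℤ) - 5 * n)
            + vstep n (av, bv)) with
        | none => rw [henc1] at h; exact absurd h (by simp)
        | some j =>
          cases henc2 : encode n ((((i : ℕ) : ℤ) - 5 * n) + vstep n (av, bv)) with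
          | none => rw [henc1, henc2] at h; exact absurd h (by simp)
          | some j' =>
            rw [henc1, henc2] at h
            injection h with h
            subst h
            simp only [Bool.or_eq_true, not_or, Bool.and_eq_true, not_and] at hguard
            have hg1 : a = false ∨ av = false := by
              rcases hguard with ⟨h1, -⟩
              cases a
              · exact Or.inl rfl
              · exact Or.inr (by simpa using h1 rfl)
            have hg2 : b = false ∨ bv = false := by
              rcases hguard with ⟨-, h2⟩
              cases b
              · exact Or.inl rfl
              · exact Or.inr (by simpa using h2 rfl)
            have he1 := encode_spec henc1
            have he2 := encode_spec henc2
            have hDnew := Dv_snoc n w (av, bv)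
            have hD'new := Dv'_snoc n w (av, bv)
            have hlastx : ∀ u ∈ (w.map Prod.fst).getLast?, u = false ∨ av = false := by
              intro u hu
              rw [List.getLast?_map] at hu
              simp only [Option.mem_map] at hu
              obtain ⟨v, hv, huv⟩ := hu
              have := ihlast v hv
              subst this
              simpa [← huv] using hg1
            have hlasty : ∀ u ∈ (w.map Prod.snd).getLast?, u = false ∨ bv = false := by
              intro u hu
              rw [List.getLast?_map] at hu
              simp only [Option.mem_map] at hu
              obtain ⟨v, hv, huv⟩ := hu
              have := ihlast v hv
              subst this
              simpa [← huv] using hg2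
            refine ⟨?_, ?_, ?_, ?_, ?_, ?_⟩
            · rw [hDnew, ← ihD, ← ihD', he1]
            · rw [hD'new, ← ihD, he2]
            · rw [List.map_append]
              refine List.isChain_append.mpr ⟨ihvx, List.isChain_singleton _, ?_⟩
              intro u hu v hv
              simp only [List.map_cons, List.map_nil, List.head?_cons, Option.mem_some_iff] at hv
              subst hv
              exact hlastx u hu
            · rw [List.map_append]
              refine List.isChain_append.mpr ⟨ihvy, List.isChain_singleton _, ?_⟩
              intro u hu v hv
              simp only [List.map_cons, List.map_nil, List.head?_cons, Option.mem_some_iff] at hv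
              subst hv
              exact hlasty u hu
            · intro hcontra; exact absurd hcontra (by simp)
            · intro u hu
              rw [List.getLast?_concat] at hu
              obtain rfl := (by simpa using hu : (av, bv) = u).symm
              rfl

lemma dfa_complete (n c : ℕ) (hn : 1 ≤ n) (hc : c < n) (w : List (Bool × Bool))
    (hx : ValidFib (w.map Prod.fst)) (hy : ValidFib (w.map Prod.snd))
    (heq : fibVal (w.map Prod.snd) = n * fibVal (w.map Prod.fst) + c) :
    ∀ p : List (Bool × Bool), (∃ s, p ++ s = w) → ∃ r, (dfaM n c).eval p = some r := by
  intro p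
  induction p using List.reverseRecOn with
  | nil =>
    intro _
    exact ⟨_, rfl⟩
  | append_singleton p ab ih =>
    rintro ⟨s, hps⟩
    obtain ⟨av, bv⟩ := ab
    have hp' : ∃ s', p ++ s' = w := ⟨(av, bv) :: s, by rw [← hps]; simp⟩
    obtain ⟨q, hq⟩ := ih hp'
    obtain ⟨i, i', a, b⟩ := q
    obtain ⟨ihD, ihD', -, -, ihnil, ihlast⟩ := dfa_sound n c p _ hq
    -- validity facts about w decomposed
    have hwx : w.map Prod.fst = (p.map Prod.fst) ++ (av :: s.map Prod.fst) := by
      rw [← hps]; simp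
    have hwy : w.map Prod.snd = (p.map Prod.snd) ++ (bv :: s.map Prod.snd) := by
      rw [← hps]; simp
    have hxa : ∀ u ∈ (p.map Prod.fst).getLast?, u = false ∨ av = false := by
      intro u hu
      rw [hwx] at hx
      obtain ⟨-, -, hcond⟩ := List.isChain_append.mp hx
      exact hcond u hu av (by simp)
    have hyb : ∀ u ∈ (p.map Prod.snd).getLast?, u = false ∨ bv = false := by
      intro u hu
      rw [hwy] at hy
      obtain ⟨-, -, hcond⟩ := List.isChain_append.mp hy
      exact hcond u hu bv (by simp)
    -- guard is false
    have hguard : ((a && av) || (b && bv)) = false := by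
      rcases List.eq_nil_or_concat p with hpnil | ⟨p', u, hpu⟩
      · have := ihnil hpnil
        have ha : a = false := by
          have := congrArg Prod.fst this; simpa using this
        have hbf : b = false := by
          have := congrArg Prod.snd this; simpa using this
        simp [ha, hbf]
      · have hlast : p.getLast? = some u := by
          rw [hpu, List.concat_eq_append]; exact List.getLast?_concat
        have huab : u = (a, b) := ihlast u (by rw [hlast]; rfl)
        have h1 : u.1 = false ∨ av = false := by
          apply hxa
          rw [List.getLast?_map, hlast]
          simp
        have h2 : u.2 = false ∨ bv = false := by
          apply hyb
          rw [List.getLast?_map, hlast]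
          simp
        rw [huab] at h1 h2
        simp only at h1 h2
        rcases h1 with h1 | h1 <;> rcases h2 with h2 | h2 <;> simp [h1, h2]
    -- bound on new values
    have hw' : (p ++ [(av, bv)]) ++ s = w := hps
    have hbound := prefix_bound n c hn hc (p ++ [(av, bv)]) s
      (by rw [hw']; exact hx) (by rw [hw']; exact hy) (by rw [hw']; exact heq)
    have hDnew := Dv_snoc n p (av, bv)
    have hD'new := Dv'_snoc n p (av, bv)
    have hb1 : |(((i : ℕ) : ℤ) - 5 * n) + (((i' : ℕ) : ℤ) - 5 * n) + vstep n (av, bv)| ≤ 5 * n := by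
      rw [ihD, ihD', ← hDnew]
      exact_mod_cast hbound.1
    have hb2 : |(((i : ℕ) : ℤ) - 5 * n) + vstep n (av, bv)| ≤ 5 * n := by
      rw [ihD, ← hD'new]
      exact_mod_cast hbound.2
    obtain ⟨j, hj⟩ := encode_isSome hb1
    obtain ⟨j', hj'⟩ := encode_isSome hb2
    refine ⟨(j, j', av, bv), ?_⟩
    rw [DFA.eval_append_singleton, hq]
    show (dfaM n c).step _ _ = _
    simp only [dfaM]
    rw [if_neg (by rw [hguard]; simp), hj, hj']

end MultAux

open MultAux in
theorem multiplication_state_complexity :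
    ∃ C : ℕ, ∀ n c : ℕ, 1 ≤ n → c < n →
      ∃ (σ : Type) (_ : Fintype σ) (M : DFA (Bool × Bool) σ),
        Fintype.card σ ≤ C * n ^ 2 ∧
        ∀ w : List (Bool × Bool),
          w ∈ M.accepts ↔
            ValidFib (w.map Prod.fst) ∧ ValidFib (w.map Prod.snd) ∧
              fibVal (w.map Prod.snd) = n * fibVal (w.map Prod.fst) + c := by
  refine ⟨500, fun n c hn hc => ?_⟩
  refine ⟨Option (Fin (10 * n + 1) × Fin (10 * n + 1) × Bool × Bool), inferInstance,
    dfaM n c, ?_, ?_⟩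
  · have hcard : Fintype.card (Option (Fin (10 * n + 1) × Fin (10 * n + 1) × Bool × Bool))
        = (10 * n + 1) * ((10 * n + 1) * (2 * 2)) + 1 := by
      simp [Fintype.card_option, Fintype.card_prod, Fintype.card_fin, Fintype.card_bool]
    rw [hcard]
    nlinarith [sq_nonneg n, Nat.one_le_iff_ne_zero.mp hn, hn, Nat.mul_le_mul hn hn]
  · intro w
    constructor
    · intro hacc
      rw [DFA.mem_accepts] at hacc
      obtain ⟨r, hr, hcval⟩ := hacc
      obtain ⟨hD, -, hvx, hvy, -, -⟩ := dfa_sound n c w r hr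
      refine ⟨hvx, hvy, ?_⟩
      have h1 : Dv n w = (c : ℤ) := by rw [← hD, hcval]
      have h2 : (fibVal (w.map Prod.snd) : ℤ)
          = (n : ℤ) * (fibVal (w.map Prod.fst) : ℤ) + (c : ℤ) := by
        simp only [Dv] at h1; linarith
      exact_mod_cast h2
    · rintro ⟨hvx, hvy, heq⟩
      obtain ⟨r, hr⟩ := dfa_complete n c hn hc w hvx hvy heq w ⟨[], by simp⟩
      obtain ⟨hD, -, -, -, -, -⟩ := dfa_sound n c w r hr
      rw [DFA.mem_accepts]
      refine ⟨r, hr, ?_⟩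
      rw [hD]
      simp only [Dv]
      have : (fibVal (w.map Prod.snd) : ℤ)
          = (n : ℤ) * (fibVal (w.map Prod.fst) : ℤ) + (c : ℤ) := by exact_mod_cast heq
      linarith
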